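/- Let Γ be a rooted tree whose non-root nodes form a laminar-family encoding of components: for 0 ≤ i ≤ k, A_i is the partition of V into connected components of (V, E_{≤i} \ R₂) where E_{≤i} = {e : w_e ≤ w_i}, and Γ has a node v^{A,i} for each A ∈ A_i with children {v^{S,i−1} : S ∈ A_{i−1}, S ⊆ A}. Define R(v^{A,i}) = δ(A) ∩ E_i where E_i = {e : w_e = w_i}, and β_{v^{A,i}} = c(R(v^{A,i})). Then for any downwards-closed set N' of non-root nodes, letting R = ∪_{q∈N'} R(q), we have β(N')/2 ≤ c(R) ≤ β(N'). -/

import Mathlib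

open Finset

/-- The multigraph `(V, F)` determined by the edges in `F ⊆ E` with endpoints `ends`. -/
def mgraph {V E : Type*} (ends : E → Sym2 V) (F : Finset E) : SimpleGraph V where
  Adj u v := u ≠ v ∧ ∃ e ∈ F, ends e = s(u, v)
  symm := ⟨by
    rintro u v ⟨h, e, he, hv⟩
    exact ⟨h.symm, e, he, by rw [hv, Sym2.eq_swap]⟩⟩
  loopless := ⟨fun u h => h.1 rfl⟩

open Classical in
/-- `Elei ends w wval i` is the edge set `E_{≤i} = {e : w e ≤ w_i}` (with `E_{≤0} = ∅`). -/
noncomputable def Elei {V E : Type*} [Fintype E] (ends : E → Sym2 V) (w : E → ℝ)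
    (wval : ℕ → ℝ) (i : ℕ) : Finset E :=
  if i = 0 then ∅ else Finset.univ.filter (fun e => w e ≤ wval i)

/-- `compSets` is the partition `A_i` of `V` into the (vertex sets of) connected
components of `(V, E_{≤i} \ R₂)`. -/
def compSets {V E : Type*} [Fintype E] [DecidableEq E] (ends : E → Sym2 V) (w : E → ℝ)
    (wval : ℕ → ℝ) (R₂ : Finset E) (i : ℕ) : Set (Set V) :=
  {A | ∃ C : (mgraph ends (Elei ends w wval i \ R₂)).ConnectedComponent, A = C.supp}

open Classical in
/-- For a node `q = (A, i)` of the laminar tree, `Redge q = δ(A) ∩ E_i`. -/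
noncomputable def Redge {V E : Type*} [Fintype E] (ends : E → Sym2 V) (w : E → ℝ)
    (wval : ℕ → ℝ) (q : Set V × ℕ) : Finset E :=
  Finset.univ.filter (fun e => w e = wval q.2 ∧
    ∃ u v : V, ends e = s(u, v) ∧ u ∈ q.1 ∧ v ∉ q.1)

lemma mem_Redge {V E : Type*} [Fintype E] (ends : E → Sym2 V) (w : E → ℝ)
    (wval : ℕ → ℝ) (q : Set V × ℕ) (e : E) :
    e ∈ Redge ends w wval q ↔ w e = wval q.2 ∧
      ∃ u v : V, ends e = s(u, v) ∧ u ∈ q.1 ∧ v ∉ q.1 := by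
  simp [Redge]

/-- Lemma 4.5(i): for any downwards-closed set `N'` of non-root nodes of the laminar
tree built from `R₂`, with `R = ∪_{q ∈ N'} R(q)`, we have `β(N')/2 ≤ c(R) ≤ β(N')`. -/
theorem stmt5 {V E : Type*} [Fintype V] [Fintype E] [DecidableEq E] [DecidableEq V]
    (ends : E → Sym2 V) (w : E → ℝ) (c : E → ℝ) (hc : ∀ e, 0 ≤ c e)
    (k : ℕ) (wval : ℕ → ℝ) (hw0 : wval 0 = 0)
    (hmono : ∀ i j : ℕ, i < j → j ≤ k → wval i < wval j)
    (R₂ : Finset E)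
    (N' : Finset (Set V × ℕ))
    (hvalid : ∀ q ∈ N', q.2 < k ∧ q.1 ∈ compSets ends w wval R₂ q.2)
    (hdown : ∀ q ∈ N', 1 ≤ q.2 → ∀ S ∈ compSets ends w wval R₂ (q.2 - 1),
      S ⊆ q.1 → (S, q.2 - 1) ∈ N')
    (R : Finset E) (hR : R = N'.biUnion (Redge ends w wval)) :
    (∑ q ∈ N', ∑ e ∈ Redge ends w wval q, c e) / 2 ≤ ∑ e ∈ R, c e ∧
      ∑ e ∈ R, c e ≤ ∑ q ∈ N', ∑ e ∈ Redge ends w wval q, c e := by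
  classical
  subst hR
  set Rf := Redge ends w wval with hRf
  set m : E → ℕ := fun e => (N'.filter (fun q => e ∈ Rf q)).card with hm
  have hsum : ∑ q ∈ N', ∑ e ∈ Rf q, c e = ∑ e : E, (m e : ℝ) * c e := by
    have h1 : ∀ q, ∑ e ∈ Rf q, c e = ∑ e : E, if e ∈ Rf q then c e else 0 := by
      intro q
      rw [Finset.sum_ite_mem, Finset.univ_inter]
    simp_rw [h1]
    rw [Finset.sum_comm]
    refine Finset.sum_congr rfl fun e _ => ?_
    rw [hm, ← Finset.sum_filter, Finset.sum_const, nsmul_eq_mul]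
  have hle2 : ∀ e, m e ≤ 2 := by
    intro e
    rcases (N'.filter (fun q => e ∈ Rf q)).eq_empty_or_nonempty with h | ⟨q0, hq0⟩
    · simp [hm, h]
    obtain ⟨⟨a, b⟩, hab⟩ := Quot.exists_rep (ends e)
    have hab' : ends e = s(a, b) := hab.symm
    have hq0' := Finset.mem_filter.mp hq0
    have hlevel : ∀ q ∈ N'.filter (fun q => e ∈ Rf q), q.2 = q0.2 := by
      intro q hq
      have hq' := Finset.mem_filter.mp hq
      have h1 := ((mem_Redge ends w wval q e).mp hq'.2).1
      have h2 := ((mem_Redge ends w wval q0 e).mp hq0'.2).1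
      have hk1 := (hvalid q hq'.1).1
      have hk2 := (hvalid q0 hq0'.1).1
      by_contra hne
      rcases lt_or_gt_of_ne hne with hlt | hlt
      · exact absurd (h1.symm.trans h2) (ne_of_lt (hmono _ _ hlt hk2.le))
      · exact absurd (h2.symm.trans h1) (ne_of_lt (hmono _ _ hlt hk1.le))
    set i := q0.2 with hi
    set G := mgraph ends (Elei ends w wval i \ R₂) with hG
    have hmem : ∀ q ∈ N'.filter (fun q => e ∈ Rf q),
        q = ((G.connectedComponentMk a).supp, i) ∨
        q = ((G.connectedComponentMk b).supp, i) := by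
      intro q hq
      have hq' := Finset.mem_filter.mp hq
      have hlev := hlevel q hq
      obtain ⟨-, u, v, huv, hu, hv⟩ := (mem_Redge ends w wval q e).mp hq'.2
      have hv2 := (hvalid q hq'.1).2
      rw [hlev] at hv2
      obtain ⟨C, hC⟩ := hv2
      have hcase : (a ∈ q.1 ∧ b ∉ q.1) ∨ (b ∈ q.1 ∧ a ∉ q.1) := by
        have heq := huv.symm.trans hab'
        rw [Sym2.eq_iff] at heq
        rcases heq with ⟨h1, h2⟩ | ⟨h1, h2⟩
        · exact Or.inl ⟨h1 ▸ hu, h2 ▸ hv⟩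
        · exact Or.inr ⟨h1 ▸ hu, h2 ▸ hv⟩
      rcases hcase with ⟨ha, -⟩ | ⟨hb, -⟩
      · left
        have hmk : G.connectedComponentMk a = C := by
          rw [hC] at ha; exact (SimpleGraph.ConnectedComponent.mem_supp_iff _ _).mp ha
        rw [Prod.ext_iff]
        exact ⟨by rw [hC, hmk], hlev⟩
      · right
        have hmk : G.connectedComponentMk b = C := by
          rw [hC] at hb; exact (SimpleGraph.ConnectedComponent.mem_supp_iff _ _).mp hb
        rw [Prod.ext_iff]
        exact ⟨by rw [hC, hmk], hlev⟩
    have hsub : N'.filter (fun q => e ∈ Rf q) ⊆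
        {((G.connectedComponentMk a).supp, i), ((G.connectedComponentMk b).supp, i)} := by
      intro q hq
      rcases hmem q hq with h | h <;> simp [h]
    calc m e ≤ ({((G.connectedComponentMk a).supp, i),
          ((G.connectedComponentMk b).supp, i)} : Finset (Set V × ℕ)).card :=
          Finset.card_le_card hsub
      _ ≤ 2 := le_trans (Finset.card_insert_le _ _) (by simp)
  have hmemR : ∀ e ∈ N'.biUnion Rf, 1 ≤ m e := by
    intro e he
    obtain ⟨q, hq, hqe⟩ := Finset.mem_biUnion.mp he
    rw [hm]
    exact Finset.card_pos.mpr ⟨q, Finset.mem_filter.mpr ⟨hq, hqe⟩⟩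
  have hzero : ∀ e ∉ N'.biUnion Rf, m e = 0 := by
    intro e he
    rw [hm, Finset.card_eq_zero, Finset.filter_eq_empty_iff]
    intro q hq hqe
    exact he (Finset.mem_biUnion.mpr ⟨q, hq, hqe⟩)
  constructor
  · rw [hsum, div_le_iff₀ (by norm_num : (0:ℝ) < 2)]
    have : ∑ e : E, (m e : ℝ) * c e = ∑ e ∈ N'.biUnion Rf, (m e : ℝ) * c e := by
      symm
      apply Finset.sum_subset (Finset.subset_univ _)
      intro e _ he
      rw [hzero e he]
      simp
    rw [this, Finset.sum_mul]
    apply Finset.sum_le_sum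
    intro e _
    have h2 : (m e : ℝ) ≤ 2 := by exact_mod_cast hle2 e
    calc (m e : ℝ) * c e ≤ 2 * c e := mul_le_mul_of_nonneg_right h2 (hc e)
      _ = c e * 2 := mul_comm _ _
  · rw [hsum]
    calc ∑ e ∈ N'.biUnion Rf, c e ≤ ∑ e ∈ N'.biUnion Rf, (m e : ℝ) * c e := by
          apply Finset.sum_le_sum
          intro e he
          have h1 : (1:ℝ) ≤ (m e : ℝ) := by exact_mod_cast hmemR e he
          nlinarith [hc e]
      _ ≤ ∑ e : E, (m e : ℝ) * c e := by
          apply Finset.sum_le_sum_of_subset_of_nonneg (Finset.subset_univ _)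
          intro e _ _
          exact mul_nonneg (by positivity) (hc e)
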